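/- For all integers ℓ ≥ 2 and reals τ ≥ 1 there exists a constant C̃ = C̃(ℓ, τ) > 0 as follows. Let s ≥ ℓ, let M ≥ 1 be an integer, let 0 < Δ with M < 1/Δ, set α := MΔ, and let ω = (ω_1, …, ω_s) be pairwise distinct points in [0, 1) with ω_j = τ_j·(α/M) for 1 ≤ j ≤ ℓ, where 0 = τ_1 < τ_2 < … < τ_ℓ ≤ τ and |τ_i − τ_j| ≥ 1 for i ≠ j (the remaining ω_j arbitrary). Let (A_1, …, A_ℓ, B_1, …, B_ℓ) solve U_{2ℓ}(h)·(A; B)ᵀ = (0, …, 0, (2ℓ−1)!)ᵀ with h_i = −τ_i·(α/M), and define u ∈ ℂ^{2s} by u_j := (α/M)^{2ℓ−1}·A_j and u_{s+j} := (α/M)^{2ℓ−1}·2πi·z_j·B_j for 1 ≤ j ≤ ℓ, where z_j = exp(−2πi ω_j), and u_j = u_{s+j} = 0 otherwise. Then ‖Φ_M(ω)·u‖₂ ≤ √(M+1) · (2πα)^{2ℓ−1} · (1 + C̃ · 2πα). -/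

import Mathlib

open scoped BigOperators

/-- The square `2ℓ × 2ℓ` confluent Vandermonde matrix `U_{2ℓ}(h)`: rows `k = 0, …, 2ℓ-1`,
entry `h_j^k` in column `j` and `k h_j^{k-1}` in column `ℓ + j`. -/
noncomputable def U2l (ℓ : ℕ) (h : Fin ℓ → ℝ) : Matrix (Fin (2 * ℓ)) (Fin ℓ ⊕ Fin ℓ) ℂ :=
  fun k => Sum.elim (fun j => ((h j : ℂ)) ^ (k : ℕ))
    (fun j => ((k : ℕ) : ℂ) * ((h j : ℂ)) ^ ((k : ℕ) - 1))

/-- The right-hand side `(0, …, 0, (2ℓ-1)!)ᵀ` of the finite-difference linear system. -/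
noncomputable def fdRhs (ℓ : ℕ) : Fin (2 * ℓ) → ℂ :=
  fun k => if (k : ℕ) = 2 * ℓ - 1 then ((2 * ℓ - 1).factorial : ℂ) else 0

/-- The discrete ℓ² norm of a vector. -/
noncomputable def l2norm {n : Type*} [Fintype n] (v : n → ℂ) : ℝ :=
  Real.sqrt (∑ i, ‖v i‖ ^ 2)

/-- The `(M+1) × 2s` confluent Vandermonde matrix `Φ_M(ω)` with nodes `z_j = exp(-2πi ω_j)`:
rows `k = 0, …, M`, entry `z_j^k` in column `j` and `k z_j^{k-1}` in column `s + j`. -/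
noncomputable def PhiMat (M s : ℕ) (ω : Fin s → ℝ) : Matrix (Fin (M + 1)) (Fin s ⊕ Fin s) ℂ :=
  fun k => Sum.elim
    (fun j => Complex.exp (-(2 * (Real.pi : ℂ) * Complex.I * (ω j : ℂ))) ^ (k : ℕ))
    (fun j => ((k : ℕ) : ℂ) *
      Complex.exp (-(2 * (Real.pi : ℂ) * Complex.I * (ω j : ℂ))) ^ ((k : ℕ) - 1))

section Helpers
open Polynomial

lemma choose_le_four_pow (ℓ i : ℕ) : ((2*ℓ).choose i : ℝ) ≤ 4 ^ ℓ := by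
  have h1 : (2*ℓ).choose i ≤ 2 ^ (2*ℓ) := by
    rcases le_or_gt i (2*ℓ) with hi | hi
    · calc (2*ℓ).choose i ≤ ∑ m ∈ Finset.range (2*ℓ+1), (2*ℓ).choose m :=
          Finset.single_le_sum (fun _ _ => Nat.zero_le _) (Finset.mem_range.2 (by omega))
        _ = 2 ^ (2*ℓ) := Nat.sum_range_choose _
    · simp [Nat.choose_eq_zero_of_lt hi]
  have h2 : (2:ℕ) ^ (2*ℓ) = 4 ^ ℓ := by
    rw [pow_mul]; norm_num
  calc ((2*ℓ).choose i : ℝ) ≤ ((2:ℕ) ^ (2*ℓ) : ℕ) := by exact_mod_cast h1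
    _ = 4 ^ ℓ := by rw [h2]; push_cast; ring

noncomputable def Smom (ℓ : ℕ) (h : Fin ℓ → ℝ) (A B : Fin ℓ → ℂ) (m : ℕ) : ℂ :=
  ∑ j, (A j * (h j : ℂ) ^ m + B j * m * (h j : ℂ) ^ (m - 1))

noncomputable def nodePoly (ℓ : ℕ) (h : Fin ℓ → ℝ) : Polynomial ℂ :=
  ∏ j : Fin ℓ, (X - C (h j : ℂ)) ^ 2

lemma nodePoly_monic (ℓ : ℕ) (h : Fin ℓ → ℝ) : (nodePoly ℓ h).Monic :=
  monic_prod_of_monic _ _ fun j _ => (monic_X_sub_C _).pow 2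

lemma nodePoly_natDegree (ℓ : ℕ) (h : Fin ℓ → ℝ) : (nodePoly ℓ h).natDegree = 2 * ℓ := by
  rw [nodePoly, natDegree_prod_of_monic _ _ fun j _ => (monic_X_sub_C _).pow 2]
  simp [natDegree_pow, natDegree_X_sub_C, mul_comm]

lemma nodePoly_coeff_bound (ℓ : ℕ) (h : Fin ℓ → ℝ) (H : ℝ) (hH : 0 ≤ H)
    (hb : ∀ j, |h j| ≤ H) (i : ℕ) :
    ‖(nodePoly ℓ h).coeff i‖ ≤ 4 ^ ℓ * H ^ (2*ℓ - i) := by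
  have h1 := Polynomial.coeff_le_of_roots_le (p := nodePoly ℓ h) (f := RingHom.id ℂ) (B := H) i
    (nodePoly_monic ℓ h) (IsAlgClosed.splits _) ?_
  · rw [Polynomial.map_id] at h1
    refine h1.trans ?_
    rw [nodePoly_natDegree, mul_comm]
    exact mul_le_mul_of_nonneg_right (choose_le_four_pow ℓ i) (pow_nonneg hH _)
  · intro z hz
    rw [Polynomial.map_id] at hz
    have hroot : (nodePoly ℓ h).IsRoot z := Polynomial.isRoot_of_mem_roots hz
    rw [Polynomial.IsRoot, nodePoly, Polynomial.eval_prod] at hroot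
    obtain ⟨j, -, hj⟩ := Finset.prod_eq_zero_iff.1 hroot
    have : z = (h j : ℂ) := sub_eq_zero.1 (by simpa using hj)
    rw [this, Complex.norm_real]
    exact hb j

lemma Lfun_expand (ℓ : ℕ) (h : Fin ℓ → ℝ) (A B : Fin ℓ → ℂ) (q : Polynomial ℂ) :
    ∑ j, (A j * q.eval (h j : ℂ) + B j * (derivative q).eval (h j : ℂ))
      = ∑ i ∈ Finset.range (q.natDegree + 1), q.coeff i * Smom ℓ h A B i := by
  have hq : ∀ x : ℂ, q.eval x = ∑ i ∈ Finset.range (q.natDegree + 1), q.coeff i * x ^ i :=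
    fun x => eval_eq_sum_range x
  have hq' : ∀ x : ℂ, (derivative q).eval x
      = ∑ i ∈ Finset.range (q.natDegree + 1), q.coeff i * i * x ^ (i - 1) := by
    intro x
    conv_lhs => rw [Polynomial.as_sum_range' q (q.natDegree + 1) (Nat.lt_succ_self _)]
    rw [map_sum, Polynomial.eval_finset_sum]
    refine Finset.sum_congr rfl fun i _ => ?_
    rw [Polynomial.derivative_monomial, Polynomial.eval_monomial]
  calc ∑ j, (A j * q.eval (h j : ℂ) + B j * (derivative q).eval (h j : ℂ))
      = ∑ j, ∑ i ∈ Finset.range (q.natDegree + 1),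
          q.coeff i * (A j * (h j : ℂ) ^ i + B j * i * (h j : ℂ) ^ (i - 1)) := by
        refine Finset.sum_congr rfl fun j _ => ?_
        rw [hq, hq', Finset.mul_sum, Finset.mul_sum, ← Finset.sum_add_distrib]
        exact Finset.sum_congr rfl fun i _ => by ring
    _ = ∑ i ∈ Finset.range (q.natDegree + 1), ∑ j,
          q.coeff i * (A j * (h j : ℂ) ^ i + B j * i * (h j : ℂ) ^ (i - 1)) := Finset.sum_comm
    _ = _ := by
        refine Finset.sum_congr rfl fun i _ => ?_
        rw [Smom, Finset.mul_sum]

lemma Lfun_vanish (ℓ : ℕ) (h : Fin ℓ → ℝ) (A B : Fin ℓ → ℂ) (r : ℕ) :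
    ∑ j, (A j * (nodePoly ℓ h * X ^ r).eval (h j : ℂ)
      + B j * (derivative (nodePoly ℓ h * X ^ r)).eval (h j : ℂ)) = 0 := by
  refine Finset.sum_eq_zero fun j _ => ?_
  obtain ⟨g, hg⟩ : (X - C (h j : ℂ)) ^ 2 ∣ nodePoly ℓ h * X ^ r :=
    (Finset.dvd_prod_of_mem _ (Finset.mem_univ j)).mul_right _
  rw [hg]
  have heval : (((X - C ((h j : ℝ) : ℂ)) ^ 2) * g).eval (h j : ℂ) = 0 := by simp
  have hder : (derivative (((X - C ((h j : ℝ) : ℂ)) ^ 2) * g)).eval (h j : ℂ) = 0 := by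
    rw [derivative_mul, derivative_pow]
    simp
  rw [heval, hder]; ring

lemma Smom_rec (ℓ : ℕ) (h : Fin ℓ → ℝ) (A B : Fin ℓ → ℂ) (r : ℕ) :
    Smom ℓ h A B (2*ℓ + r)
      = -∑ i ∈ Finset.range (2*ℓ), (nodePoly ℓ h).coeff i * Smom ℓ h A B (i + r) := by
  have h0 := Lfun_vanish ℓ h A B r
  rw [Lfun_expand ℓ h A B] at h0
  have hnd : (nodePoly ℓ h * X ^ r).natDegree = 2*ℓ + r := by
    rw [(nodePoly_monic ℓ h).natDegree_mul (monic_X_pow r), nodePoly_natDegree, natDegree_X_pow]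
  rw [hnd] at h0
  have hstep : ∑ i ∈ Finset.range (2*ℓ + r + 1), (nodePoly ℓ h * X ^ r).coeff i * Smom ℓ h A B i
      = ∑ i ∈ Finset.Ico r (2*ℓ + r + 1), (nodePoly ℓ h * X ^ r).coeff i * Smom ℓ h A B i := by
    symm
    refine Finset.sum_subset ?_ ?_
    · intro x hx
      simp only [Finset.mem_Ico, Finset.mem_range] at *
      omega
    · intro x hx1 hx2
      simp only [Finset.mem_Ico, Finset.mem_range, not_and, not_le] at hx1 hx2
      rw [Polynomial.coeff_mul_X_pow', if_neg (by omega), zero_mul]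
  rw [hstep, Finset.sum_Ico_eq_sum_range] at h0
  have hn : 2*ℓ + r + 1 - r = 2*ℓ + 1 := by omega
  rw [hn] at h0
  have hsimp : ∀ i ∈ Finset.range (2*ℓ + 1),
      (nodePoly ℓ h * X ^ r).coeff (r + i) * Smom ℓ h A B (r + i)
        = (nodePoly ℓ h).coeff i * Smom ℓ h A B (i + r) := by
    intro i _
    rw [Polynomial.coeff_mul_X_pow', if_pos (by omega)]
    congr 2 <;> omega
  rw [Finset.sum_congr rfl hsimp, Finset.sum_range_succ] at h0
  have hlead : (nodePoly ℓ h).coeff (2*ℓ) = 1 := by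
    have := (nodePoly_monic ℓ h).coeff_natDegree
    rwa [nodePoly_natDegree] at this
  rw [hlead, one_mul] at h0
  linear_combination h0

lemma Smom_bound (ℓ : ℕ) (hℓ : 1 ≤ ℓ) (h : Fin ℓ → ℝ) (A B : Fin ℓ → ℂ)
    (H : ℝ) (hH : 0 ≤ H) (hb : ∀ j, |h j| ≤ H)
    (hbase : ∀ m, m < 2*ℓ →
      Smom ℓ h A B m = if m = 2*ℓ - 1 then (((2*ℓ - 1).factorial : ℕ) : ℂ) else 0) :
    ∀ m, ‖Smom ℓ h A B m‖ ≤ ((2*ℓ - 1).factorial : ℝ) * (m.choose (2*ℓ - 1)) *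
      (((2*ℓ : ℝ) * 4 ^ ℓ) * H) ^ (m - (2*ℓ - 1)) := by
  have hD1 : (1:ℝ) ≤ (2*ℓ : ℝ) * 4 ^ ℓ := by
    have h4 : (1:ℝ) ≤ 4 ^ ℓ := one_le_pow₀ (by norm_num)
    have h2 : (1:ℝ) ≤ (2*ℓ : ℝ) := by
      have : (1:ℝ) ≤ (ℓ:ℝ) := by exact_mod_cast hℓ
      nlinarith
    nlinarith
  have hDH : 0 ≤ (2*ℓ : ℝ) * 4 ^ ℓ * H := mul_nonneg (by linarith) hH
  intro m
  induction m using Nat.strong_induction_on with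
  | _ m IH =>
  rcases lt_or_ge m (2*ℓ) with hm | hm
  · rw [hbase m hm]
    split_ifs with he
    · subst he
      simp [Nat.choose_self]
    · rw [norm_zero]
      positivity
  · obtain ⟨r, rfl⟩ : ∃ r, m = 2*ℓ + r := ⟨m - 2*ℓ, by omega⟩
    rw [Smom_rec]
    have hexp : 2*ℓ + r - (2*ℓ - 1) = r + 1 := by omega
    rw [hexp, norm_neg]
    -- per-term bound
    have hterm : ∀ i ∈ Finset.range (2*ℓ),
        ‖(nodePoly ℓ h).coeff i * Smom ℓ h A B (i + r)‖
          ≤ ((2*ℓ - 1).factorial : ℝ) * ((2*ℓ + r).choose (2*ℓ - 1)) *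
            (4 ^ ℓ * (((2*ℓ : ℝ) * 4 ^ ℓ) ^ r * H ^ (r + 1))) := by
      intro i hi
      rw [Finset.mem_range] at hi
      rw [norm_mul]
      rcases lt_or_ge (i + r) (2*ℓ - 1) with hir | hir
      · -- Smom (i+r) = 0 case: the IH bound has choose = 0
        have h1 := IH (i + r) (by omega)
        rw [Nat.choose_eq_zero_of_lt hir] at h1
        simp only [Nat.cast_zero, mul_zero, zero_mul] at h1
        have h2 : ‖Smom ℓ h A B (i + r)‖ = 0 := le_antisymm h1 (norm_nonneg _)
        rw [h2, mul_zero]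
        positivity
      · have h1 := IH (i + r) (by omega)
        have h2 := nodePoly_coeff_bound ℓ h H hH hb i
        have h3 : ((i+r).choose (2*ℓ - 1) : ℝ) ≤ ((2*ℓ + r).choose (2*ℓ - 1) : ℝ) := by
          exact_mod_cast Nat.choose_le_choose _ (by omega)
        have h4 : (((2*ℓ : ℝ) * 4 ^ ℓ) * H) ^ (i + r - (2*ℓ - 1))
            = ((2*ℓ : ℝ) * 4 ^ ℓ) ^ (i + r - (2*ℓ - 1)) * H ^ (i + r - (2*ℓ - 1)) :=
          mul_pow _ _ _
        have h5 : ((2*ℓ : ℝ) * 4 ^ ℓ) ^ (i + r - (2*ℓ - 1)) ≤ ((2*ℓ : ℝ) * 4 ^ ℓ) ^ r :=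
          pow_le_pow_right₀ hD1 (by omega)
        have h6 : H ^ (2*ℓ - i) * H ^ (i + r - (2*ℓ - 1)) = H ^ (r + 1) := by
          rw [← pow_add]
          congr 1
          omega
        calc ‖(nodePoly ℓ h).coeff i‖ * ‖Smom ℓ h A B (i + r)‖
            ≤ (4 ^ ℓ * H ^ (2*ℓ - i)) *
              (((2*ℓ - 1).factorial : ℝ) * ((i+r).choose (2*ℓ - 1)) *
                ((((2*ℓ : ℝ) * 4 ^ ℓ) * H) ^ (i + r - (2*ℓ - 1)))) := by
              exact mul_le_mul h2 h1 (norm_nonneg _) (by positivity)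
          _ = ((2*ℓ - 1).factorial : ℝ) * ((i+r).choose (2*ℓ - 1)) *
                (4 ^ ℓ * (((2*ℓ : ℝ) * 4 ^ ℓ) ^ (i + r - (2*ℓ - 1)) *
                  (H ^ (2*ℓ - i) * H ^ (i + r - (2*ℓ - 1))))) := by
              rw [h4]; ring
          _ ≤ ((2*ℓ - 1).factorial : ℝ) * ((2*ℓ + r).choose (2*ℓ - 1)) *
                (4 ^ ℓ * (((2*ℓ : ℝ) * 4 ^ ℓ) ^ r * (H ^ (2*ℓ - i) * H ^ (i + r - (2*ℓ - 1))))) := by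
              have hf : (0:ℝ) ≤ ((2*ℓ - 1).factorial : ℝ) := Nat.cast_nonneg _
              gcongr
          _ = ((2*ℓ - 1).factorial : ℝ) * ((2*ℓ + r).choose (2*ℓ - 1)) *
                (4 ^ ℓ * (((2*ℓ : ℝ) * 4 ^ ℓ) ^ r * H ^ (r + 1))) := by rw [h6]
    calc ‖∑ i ∈ Finset.range (2*ℓ), (nodePoly ℓ h).coeff i * Smom ℓ h A B (i + r)‖
        ≤ ∑ i ∈ Finset.range (2*ℓ), ‖(nodePoly ℓ h).coeff i * Smom ℓ h A B (i + r)‖ :=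
          norm_sum_le _ _
      _ ≤ ∑ i ∈ Finset.range (2*ℓ), ((2*ℓ - 1).factorial : ℝ) *
            ((2*ℓ + r).choose (2*ℓ - 1)) *
            (4 ^ ℓ * (((2*ℓ : ℝ) * 4 ^ ℓ) ^ r * H ^ (r + 1))) :=
          Finset.sum_le_sum hterm
      _ = ((2*ℓ - 1).factorial : ℝ) * ((2*ℓ + r).choose (2*ℓ - 1)) *
            (((2*ℓ : ℝ) * 4 ^ ℓ) * H) ^ (r + 1) := by
          rw [Finset.sum_const, Finset.card_range]
          rw [mul_pow, pow_succ]
          push_cast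
          ring

lemma exp_tsum (z : ℂ) : Complex.exp z = ∑' n : ℕ, z ^ n / n.factorial := by
  rw [Complex.exp_eq_exp_ℂ, NormedSpace.exp_eq_tsum_div]

lemma summable_exp_div (z : ℂ) : Summable fun n : ℕ => z ^ n / n.factorial :=
  NormedSpace.expSeries_div_summable z

lemma series_repr (ℓ : ℕ) (h : Fin ℓ → ℝ) (A B : Fin ℓ → ℂ) (w : ℂ) :
    Summable (fun m => w ^ m / m.factorial * Smom ℓ h A B m) ∧
    ∑ j, (A j + w * B j) * Complex.exp (w * (h j : ℂ))
      = ∑' m, w ^ m / m.factorial * Smom ℓ h A B m := by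
  classical
  set f : Fin ℓ → ℕ → ℂ := fun j m =>
    w ^ m / m.factorial * (A j * (h j : ℂ) ^ m + B j * m * (h j : ℂ) ^ (m - 1)) with hf
  have key : ∀ j : Fin ℓ, Summable (f j) ∧
      ∑' m, f j m = (A j + w * B j) * Complex.exp (w * (h j : ℂ)) := by
    intro j
    set x : ℂ := (h j : ℂ)
    have hshift : ∀ m : ℕ, w ^ (m+1) / (m+1).factorial * (B j * (m+1 : ℕ) * x ^ m)
        = (w * B j) * ((w * x) ^ m / m.factorial) := by
      intro m
      have hfac : ((m+1).factorial : ℂ) = (m+1 : ℕ) * (m.factorial : ℕ) := by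
        rw [Nat.factorial_succ]; push_cast; ring
      have hm1 : ((m+1 : ℕ) : ℂ) ≠ 0 := by exact_mod_cast Nat.succ_ne_zero m
      have hmf : ((m.factorial : ℕ) : ℂ) ≠ 0 := by exact_mod_cast m.factorial_ne_zero
      rw [hfac, div_mul_eq_mul_div, mul_div_assoc']
      rw [div_eq_div_iff (by exact mul_ne_zero hm1 hmf) hmf]
      ring
    set g : ℕ → ℂ := fun m => w ^ m / m.factorial * (B j * m * x ^ (m - 1)) with hg
    have hg1 : ∀ m : ℕ, g (m + 1) = (w * B j) * ((w * x) ^ m / m.factorial) := by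
      intro m
      rw [hg]
      simp only [Nat.add_sub_cancel]
      exact_mod_cast hshift m
    have hgs : Summable g := by
      rw [← summable_nat_add_iff 1]
      simp only [hg1]
      exact (summable_exp_div (w * x)).mul_left _
    have hgt : ∑' m, g m = (w * B j) * Complex.exp (w * x) := by
      rw [Summable.tsum_eq_zero_add hgs]
      simp only [hg1]
      rw [tsum_mul_left, ← exp_tsum]
      simp [hg]
    have hA : Summable (fun m => A j * ((w * x) ^ m / m.factorial)) :=
      (summable_exp_div (w * x)).mul_left _
    have hAt : ∑' m, A j * ((w * x) ^ m / m.factorial) = A j * Complex.exp (w * x) := by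
      rw [tsum_mul_left, ← exp_tsum]
    have hfeq : f j = fun m => A j * ((w * x) ^ m / m.factorial) + g m := by
      funext m
      rw [hf, hg]
      simp only []
      rw [mul_pow]
      ring
    constructor
    · rw [hfeq]; exact hA.add hgs
    · rw [hfeq, Summable.tsum_add hA hgs, hAt, hgt]; ring
  have hFeq : (fun m => w ^ m / m.factorial * Smom ℓ h A B m) = fun m => ∑ j, f j m := by
    funext m
    rw [Smom, Finset.mul_sum]
  have hsumm : Summable (fun m => w ^ m / m.factorial * Smom ℓ h A B m) := by
    rw [hFeq]
    exact summable_sum fun j _ => (key j).1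
  refine ⟨hsumm, ?_⟩
  rw [hFeq, Summable.tsum_finsetSum fun j _ => (key j).1]
  exact Finset.sum_congr rfl fun j _ => ((key j).2).symm

lemma real_exp_tsum (x : ℝ) : Real.exp x = ∑' n : ℕ, x ^ n / n.factorial := by
  rw [Real.exp_eq_exp_ℝ, NormedSpace.exp_eq_tsum_div]

lemma key_norm_bound (ℓ : ℕ) (hℓ : 1 ≤ ℓ) (h : Fin ℓ → ℝ) (A B : Fin ℓ → ℂ)
    (H : ℝ) (hH : 0 ≤ H) (hb : ∀ j, |h j| ≤ H)
    (hbase : ∀ m, m < 2*ℓ →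
      Smom ℓ h A B m = if m = 2*ℓ - 1 then (((2*ℓ - 1).factorial : ℕ) : ℂ) else 0)
    (w : ℂ) :
    ‖∑ j, (A j + w * B j) * Complex.exp (w * (h j : ℂ))‖
      ≤ ‖w‖ ^ (2*ℓ - 1) * (1 + (‖w‖ * ((2*ℓ : ℝ) * 4 ^ ℓ) * H) *
          Real.exp (‖w‖ * ((2*ℓ : ℝ) * 4 ^ ℓ) * H)) := by
  obtain ⟨hsumm, hrepr⟩ := series_repr ℓ h A B w
  rw [hrepr, ← Summable.sum_add_tsum_nat_add (2*ℓ) hsumm]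
  set W : ℝ := ‖w‖ with hW
  have hW0 : 0 ≤ W := norm_nonneg w
  set x : ℝ := W * ((2*ℓ : ℝ) * 4 ^ ℓ) * H with hx
  have hx0 : 0 ≤ x := by
    have : (0:ℝ) ≤ (2*ℓ : ℝ) * 4 ^ ℓ := by positivity
    positivity
  -- head sum
  have hhead : ∑ i ∈ Finset.range (2*ℓ), w ^ i / i.factorial * Smom ℓ h A B i
      = w ^ (2*ℓ - 1) := by
    rw [Finset.sum_eq_single_of_mem (2*ℓ - 1) (Finset.mem_range.2 (by omega))]
    · rw [hbase _ (by omega), if_pos rfl]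
      rw [div_mul_eq_mul_div, mul_div_assoc]
      rw [div_self (by exact_mod_cast (2*ℓ-1).factorial_ne_zero), mul_one]
    · intro i hi hne
      rw [hbase i (Finset.mem_range.1 hi), if_neg hne, mul_zero]
  rw [hhead]
  -- tail termwise bound
  have htermb : ∀ m : ℕ, ‖w ^ (m + 2*ℓ) / (m + 2*ℓ).factorial * Smom ℓ h A B (m + 2*ℓ)‖
      ≤ W ^ (2*ℓ - 1) * x * (x ^ m / m.factorial) := by
    intro m
    have hS := Smom_bound ℓ hℓ h A B H hH hb hbase (m + 2*ℓ)
    have he1 : m + 2*ℓ - (2*ℓ - 1) = m + 1 := by omega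
    rw [he1] at hS
    have hfid : ((2*ℓ - 1).factorial : ℝ) * ((m + 2*ℓ).choose (2*ℓ - 1) : ℝ) *
        ((m+1).factorial : ℝ) = ((m + 2*ℓ).factorial : ℝ) := by
      have h9 := Nat.choose_mul_factorial_mul_factorial (n := m + 2*ℓ) (k := 2*ℓ - 1) (by omega)
      rw [show m + 2*ℓ - (2*ℓ - 1) = m + 1 by omega] at h9
      have h10 : (((m + 2*ℓ).choose (2*ℓ - 1) * (2*ℓ-1).factorial * (m+1).factorial : ℕ) : ℝ)
          = (((m + 2*ℓ).factorial : ℕ) : ℝ) := by rw [h9]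
      push_cast at h10
      linarith
    have hnorm : ‖w ^ (m + 2*ℓ) / ((m + 2*ℓ).factorial : ℂ) * Smom ℓ h A B (m + 2*ℓ)‖
        = W ^ (m + 2*ℓ) / ((m + 2*ℓ).factorial : ℝ) * ‖Smom ℓ h A B (m + 2*ℓ)‖ := by
      rw [norm_mul, norm_div, norm_pow]
      congr 2
      simp
    rw [hnorm]
    have hstep : W ^ (m + 2*ℓ) / ((m + 2*ℓ).factorial : ℝ) * ‖Smom ℓ h A B (m + 2*ℓ)‖
        ≤ W ^ (m + 2*ℓ) / ((m + 2*ℓ).factorial : ℝ) *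
          (((2*ℓ - 1).factorial : ℝ) * (((m + 2*ℓ).choose (2*ℓ - 1)) : ℝ) *
            (((2*ℓ : ℝ) * 4 ^ ℓ) * H) ^ (m + 1)) :=
      mul_le_mul_of_nonneg_left hS (by positivity)
    refine hstep.trans ?_
    have hfne : ((m + 2*ℓ).factorial : ℝ) ≠ 0 := by exact_mod_cast (m + 2*ℓ).factorial_ne_zero
    have hf1ne : ((m+1).factorial : ℝ) ≠ 0 := by exact_mod_cast (m+1).factorial_ne_zero
    have hmne : (m.factorial : ℝ) ≠ 0 := by exact_mod_cast m.factorial_ne_zero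
    have hwsplit : W ^ (m + 2*ℓ) = W ^ (2*ℓ - 1) * W ^ (m + 1) := by
      rw [← pow_add]
      congr 1
      omega
    have hxsplit : x ^ (m + 1) = W ^ (m + 1) * (((2*ℓ : ℝ) * 4 ^ ℓ) * H) ^ (m + 1) := by
      rw [hx, mul_assoc, mul_pow]
    have heq : W ^ (m + 2*ℓ) / ((m + 2*ℓ).factorial : ℝ) *
          (((2*ℓ - 1).factorial : ℝ) * (((m + 2*ℓ).choose (2*ℓ - 1)) : ℝ) *
            (((2*ℓ : ℝ) * 4 ^ ℓ) * H) ^ (m + 1))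
        = W ^ (2*ℓ - 1) * (x ^ (m + 1) / ((m+1).factorial : ℝ)) := by
      have h12 : W ^ (m + 2*ℓ) *
            (((2*ℓ - 1).factorial : ℝ) * (((m + 2*ℓ).choose (2*ℓ - 1)) : ℝ) *
              (((2*ℓ : ℝ) * 4 ^ ℓ) * H) ^ (m + 1)) * ((m+1).factorial : ℝ)
          = W ^ (2*ℓ - 1) * x ^ (m + 1) * ((m + 2*ℓ).factorial : ℝ) := by
        rw [hwsplit, hxsplit, ← hfid]
        ring
      field_simp
      linear_combination h12
    rw [heq]
    have hle : x ^ (m + 1) / ((m+1).factorial : ℝ) ≤ x * (x ^ m / m.factorial) := by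
      calc x ^ (m + 1) / ((m+1).factorial : ℝ) ≤ x ^ (m + 1) / (m.factorial : ℝ) := by
            apply div_le_div_of_nonneg_left (pow_nonneg hx0 (m+1))
            · exact_mod_cast m.factorial_pos
            · exact_mod_cast Nat.factorial_le (Nat.le_succ m)
        _ = x * (x ^ m / m.factorial) := by rw [pow_succ]; ring
    rw [mul_assoc]
    exact mul_le_mul_of_nonneg_left hle (by positivity)
  -- tail sum bound
  have hgsum : Summable (fun m : ℕ => W ^ (2*ℓ - 1) * x * (x ^ m / m.factorial)) :=
    (Real.summable_pow_div_factorial x).mul_left _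
  have hnsum : Summable (fun m : ℕ => ‖w ^ (m + 2*ℓ) / (m + 2*ℓ).factorial *
      Smom ℓ h A B (m + 2*ℓ)‖) :=
    Summable.of_nonneg_of_le (fun m => norm_nonneg _) htermb hgsum
  have htail : ‖∑' m : ℕ, w ^ (m + 2*ℓ) / (m + 2*ℓ).factorial * Smom ℓ h A B (m + 2*ℓ)‖
      ≤ W ^ (2*ℓ - 1) * x * Real.exp x := by
    calc ‖∑' m : ℕ, w ^ (m + 2*ℓ) / (m + 2*ℓ).factorial * Smom ℓ h A B (m + 2*ℓ)‖
        ≤ ∑' m : ℕ, ‖w ^ (m + 2*ℓ) / (m + 2*ℓ).factorial * Smom ℓ h A B (m + 2*ℓ)‖ :=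
          norm_tsum_le_tsum_norm hnsum
      _ ≤ ∑' m : ℕ, W ^ (2*ℓ - 1) * x * (x ^ m / m.factorial) :=
          Summable.tsum_le_tsum htermb hnsum hgsum
      _ = W ^ (2*ℓ - 1) * x * Real.exp x := by
          rw [tsum_mul_left, real_exp_tsum]
  calc ‖w ^ (2*ℓ - 1) + ∑' m : ℕ, w ^ (m + 2*ℓ) / (m + 2*ℓ).factorial
        * Smom ℓ h A B (m + 2*ℓ)‖
      ≤ ‖w ^ (2*ℓ - 1)‖ + ‖∑' m : ℕ, w ^ (m + 2*ℓ) / (m + 2*ℓ).factorial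
        * Smom ℓ h A B (m + 2*ℓ)‖ := norm_add_le _ _
    _ ≤ W ^ (2*ℓ - 1) + W ^ (2*ℓ - 1) * x * Real.exp x := by
        rw [norm_pow]
        exact add_le_add_right htail _
    _ = W ^ (2*ℓ - 1) * (1 + x * Real.exp x) := by ring

lemma sum_fin_restrict {s ℓ : ℕ} (hs : ℓ ≤ s) (f : Fin s → ℂ)
    (hf : ∀ j : Fin s, ℓ ≤ (j : ℕ) → f j = 0) :
    ∑ j, f j = ∑ i : Fin ℓ, f (Fin.castLE hs i) := by
  classical
  set g : ℕ → ℂ := fun i => if hi : i < s then f ⟨i, hi⟩ else 0 with hg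
  have h1 : ∑ j : Fin s, f j = ∑ i ∈ Finset.range s, g i := by
    rw [← Fin.sum_univ_eq_sum_range]
    refine Finset.sum_congr rfl fun j _ => ?_
    rw [hg]
    simp only [Fin.is_lt, dif_pos, Fin.eta]
  have h2 : ∑ i : Fin ℓ, f (Fin.castLE hs i) = ∑ i ∈ Finset.range ℓ, g i := by
    rw [← Fin.sum_univ_eq_sum_range]
    refine Finset.sum_congr rfl fun i _ => ?_
    rw [hg]
    have hi : (i : ℕ) < s := lt_of_lt_of_le i.is_lt hs
    simp only [hi, dif_pos]
    rfl
  rw [h1, h2]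
  symm
  refine Finset.sum_subset (Finset.range_subset_range.2 hs) ?_
  intro i hi1 hi2
  rw [Finset.mem_range] at hi1 hi2
  rw [hg]
  simp only [hi1, dif_pos]
  exact hf _ (by simpa using hi2)

lemma nat_mul_pow_pred (n : ℕ) (z : ℂ) : (n : ℂ) * z ^ (n - 1) * z = (n : ℂ) * z ^ n := by
  cases n with
  | zero => simp
  | succ m => rw [Nat.add_sub_cancel, pow_succ]; ring

end Helpers

set_option maxHeartbeats 1000000 in
/-- Lemma (upper bound for the image of the candidate singular vector): there is
`C̃ = C̃(ℓ, τ) > 0` such that, with `α = MΔ`, a clustered head `ω_j = τ_j α/M` (`j ≤ ℓ`),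
finite-difference weights `(A; B)` and the vector `u` built from them, one has
`‖Φ_M(ω) u‖₂ ≤ √(M+1) (2πα)^{2ℓ-1} (1 + C̃ 2πα)`. -/
theorem phi_mulvec_u_upper_bound (ℓ : ℕ) (hℓ : 2 ≤ ℓ) (τ : ℝ) (hτ : 1 ≤ τ) :
    ∃ C : ℝ, 0 < C ∧
      ∀ (s : ℕ) (hs : ℓ ≤ s) (M : ℕ), 1 ≤ M →
        ∀ Δ : ℝ, 0 < Δ → (M : ℝ) < 1 / Δ →
        ∀ α : ℝ, α = (M : ℝ) * Δ →
        ∀ t : Fin ℓ → ℝ, t ⟨0, by omega⟩ = 0 → StrictMono t → (∀ i, t i ≤ τ) →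
          (∀ i j : Fin ℓ, i ≠ j → 1 ≤ |t i - t j|) →
        ∀ ω : Fin s → ℝ, Function.Injective ω → (∀ j, ω j ∈ Set.Ico (0 : ℝ) 1) →
          (∀ j : Fin ℓ, ω (Fin.castLE hs j) = t j * (α / M)) →
        ∀ A B : Fin ℓ → ℂ,
          (U2l ℓ (fun i => -(t i) * (α / M))).mulVec (Sum.elim A B) = fdRhs ℓ →
          l2norm ((PhiMat M s ω).mulVec (Sum.elim
            (fun j : Fin s => if hj : (j : ℕ) < ℓ then
                ((α / M : ℝ) : ℂ) ^ (2 * ℓ - 1) * A ⟨(j : ℕ), hj⟩ else 0)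
            (fun j : Fin s => if hj : (j : ℕ) < ℓ then
                ((α / M : ℝ) : ℂ) ^ (2 * ℓ - 1) * (2 * (Real.pi : ℂ) * Complex.I) *
                  Complex.exp (-(2 * (Real.pi : ℂ) * Complex.I * (ω j : ℂ))) * B ⟨(j : ℕ), hj⟩
              else 0))) ≤
          Real.sqrt ((M : ℝ) + 1) * (2 * Real.pi * α) ^ (2 * ℓ - 1) *
            (1 + C * (2 * Real.pi * α)) := by
  have hℓ1 : 1 ≤ ℓ := by omega
  set D : ℝ := (2*ℓ : ℝ) * 4 ^ ℓ with hD
  have hD1 : (1:ℝ) ≤ D := by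
    rw [hD]
    have h4 : (1:ℝ) ≤ 4 ^ ℓ := one_le_pow₀ (by norm_num)
    have h2 : (1:ℝ) ≤ (2*ℓ : ℝ) := by
      have : (1:ℝ) ≤ (ℓ:ℝ) := by exact_mod_cast hℓ1
      nlinarith
    nlinarith
  have hτ0 : (0:ℝ) < τ := lt_of_lt_of_le one_pos hτ
  refine ⟨τ * D * Real.exp (2 * Real.pi * τ * D), ?_, ?_⟩
  · exact mul_pos (mul_pos hτ0 (lt_of_lt_of_le one_pos hD1)) (Real.exp_pos _)
  intro s hs M hM Δ hΔ hMΔ α hα t ht0 htmono htle htsep ω hωinj hω01 hωhead A B hsys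
  set C : ℝ := τ * D * Real.exp (2 * Real.pi * τ * D) with hC
  have hC0 : 0 < C := mul_pos (mul_pos hτ0 (lt_of_lt_of_le one_pos hD1)) (Real.exp_pos _)
  have hM0 : (0:ℝ) < M := by exact_mod_cast hM
  have hα0 : 0 < α := hα ▸ mul_pos hM0 hΔ
  have hα1 : α < 1 := by
    rw [hα]
    rw [lt_div_iff₀ hΔ] at hMΔ
    linarith
  set h : Fin ℓ → ℝ := fun i => -(t i) * (α / M) with hh
  have htnn : ∀ i, 0 ≤ t i := by
    intro i
    have h0le : (⟨0, by omega⟩ : Fin ℓ) ≤ i := by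
      simp [Fin.le_def]
    calc (0:ℝ) = t ⟨0, by omega⟩ := ht0.symm
      _ ≤ t i := htmono.monotone h0le
  set H : ℝ := τ * (α / M) with hH
  have hαM0 : 0 ≤ α / M := le_of_lt (div_pos hα0 hM0)
  have hH0 : 0 ≤ H := mul_nonneg (le_of_lt hτ0) hαM0
  have hhb : ∀ i, |h i| ≤ H := by
    intro i
    rw [hh]
    simp only [neg_mul, abs_neg, abs_mul]
    rw [abs_of_nonneg (htnn i), abs_of_nonneg hαM0, hH]
    exact mul_le_mul_of_nonneg_right (htle i) hαM0
  -- base case values of moments from the linear system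
  have hbase : ∀ m, m < 2*ℓ →
      Smom ℓ h A B m = if m = 2*ℓ - 1 then (((2*ℓ - 1).factorial : ℕ) : ℂ) else 0 := by
    intro m hm
    have hrow := congrFun hsys ⟨m, hm⟩
    simp only [Matrix.mulVec, dotProduct, U2l, fdRhs, Fintype.sum_sum_type,
      Sum.elim_inl, Sum.elim_inr] at hrow
    rw [Smom, Finset.sum_add_distrib]
    have e1 : ∑ j, A j * (h j : ℂ) ^ m = ∑ j, ((h j : ℂ)) ^ m * A j :=
      Finset.sum_congr rfl fun j _ => by ring
    have e2 : ∑ j, B j * (m : ℂ) * (h j : ℂ) ^ (m - 1)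
        = ∑ j, ((m : ℕ) : ℂ) * ((h j : ℂ)) ^ (m - 1) * B j :=
      Finset.sum_congr rfl fun j _ => by ring
    rw [e1, e2]
    convert hrow using 2
  set c : ℂ := ((α / M : ℝ) : ℂ) ^ (2 * ℓ - 1) with hc
  have key : ∀ k : Fin (M + 1),
      ‖(PhiMat M s ω).mulVec (Sum.elim
          (fun j : Fin s => if hj : (j : ℕ) < ℓ then
              ((α / M : ℝ) : ℂ) ^ (2 * ℓ - 1) * A ⟨(j : ℕ), hj⟩ else 0)
          (fun j : Fin s => if hj : (j : ℕ) < ℓ then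
              ((α / M : ℝ) : ℂ) ^ (2 * ℓ - 1) * (2 * (Real.pi : ℂ) * Complex.I) *
                Complex.exp (-(2 * (Real.pi : ℂ) * Complex.I * (ω j : ℂ))) * B ⟨(j : ℕ), hj⟩
            else 0)) k‖
      ≤ (2 * Real.pi * α) ^ (2 * ℓ - 1) * (1 + C * (2 * Real.pi * α)) := by
    intro k
    set w : ℂ := 2 * (Real.pi : ℂ) * Complex.I * ((k : ℕ) : ℂ) with hw
    have hzexp : ∀ i : Fin ℓ,
        Complex.exp (-(2 * (Real.pi : ℂ) * Complex.I * (ω (Fin.castLE hs i) : ℂ))) ^ (k : ℕ)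
          = Complex.exp (w * (h i : ℂ)) := by
      intro i
      rw [← Complex.exp_nat_mul, hωhead i, hw, hh]
      congr 1
      push_cast
      ring
    have hval : (PhiMat M s ω).mulVec (Sum.elim
        (fun j : Fin s => if hj : (j : ℕ) < ℓ then
            ((α / M : ℝ) : ℂ) ^ (2 * ℓ - 1) * A ⟨(j : ℕ), hj⟩ else 0)
        (fun j : Fin s => if hj : (j : ℕ) < ℓ then
            ((α / M : ℝ) : ℂ) ^ (2 * ℓ - 1) * (2 * (Real.pi : ℂ) * Complex.I) *
              Complex.exp (-(2 * (Real.pi : ℂ) * Complex.I * (ω j : ℂ))) * B ⟨(j : ℕ), hj⟩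
          else 0)) k
        = c * ∑ i : Fin ℓ, (A i + w * B i) * Complex.exp (w * (h i : ℂ)) := by
      simp only [Matrix.mulVec, dotProduct, PhiMat, Fintype.sum_sum_type,
        Sum.elim_inl, Sum.elim_inr]
      have e1 : ∑ j : Fin s,
          Complex.exp (-(2 * (Real.pi : ℂ) * Complex.I * (ω j : ℂ))) ^ (k : ℕ) *
            (if hj : (j : ℕ) < ℓ then c * A ⟨(j : ℕ), hj⟩ else 0)
          = ∑ i : Fin ℓ, c * (A i * Complex.exp (w * (h i : ℂ))) := by
        rw [sum_fin_restrict hs _ (fun j hj => by rw [dif_neg (by omega), mul_zero])]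
        refine Finset.sum_congr rfl fun i _ => ?_
        have hlt : ((Fin.castLE hs i : Fin s) : ℕ) < ℓ := i.is_lt
        rw [dif_pos hlt, hzexp i]
        have hAi : A ⟨((Fin.castLE hs i : Fin s) : ℕ), hlt⟩ = A i := by
          congr 1
        rw [hAi]
        ring
      have e2 : ∑ j : Fin s,
          ((k : ℕ) : ℂ) * Complex.exp (-(2 * (Real.pi : ℂ) * Complex.I * (ω j : ℂ)))
              ^ ((k : ℕ) - 1) *
            (if hj : (j : ℕ) < ℓ then
              c * (2 * (Real.pi : ℂ) * Complex.I) *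
                Complex.exp (-(2 * (Real.pi : ℂ) * Complex.I * (ω j : ℂ))) * B ⟨(j : ℕ), hj⟩
            else 0)
          = ∑ i : Fin ℓ, c * ((w * B i) * Complex.exp (w * (h i : ℂ))) := by
        rw [sum_fin_restrict hs _ (fun j hj => by rw [dif_neg (by omega), mul_zero])]
        refine Finset.sum_congr rfl fun i _ => ?_
        have hlt : ((Fin.castLE hs i : Fin s) : ℕ) < ℓ := i.is_lt
        rw [dif_pos hlt]
        have hBi : B ⟨((Fin.castLE hs i : Fin s) : ℕ), hlt⟩ = B i := by
          congr 1
        rw [hBi, ← hzexp i, hw]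
        set z : ℂ := Complex.exp (-(2 * (Real.pi : ℂ) * Complex.I * (ω (Fin.castLE hs i) : ℂ)))
        linear_combination (c * (2 * (Real.pi : ℂ) * Complex.I) * B i)
          * nat_mul_pow_pred (k : ℕ) z
      rw [e1, e2, ← Finset.sum_add_distrib, Finset.mul_sum]
      exact Finset.sum_congr rfl fun i _ => by ring
    rw [hval, norm_mul]
    have hcnorm : ‖c‖ = (α / M) ^ (2 * ℓ - 1) := by
      rw [hc, norm_pow, Complex.norm_real, Real.norm_eq_abs, abs_of_nonneg hαM0]
    have hwnorm : ‖w‖ = 2 * Real.pi * ((k : ℕ) : ℝ) := by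
      rw [hw]
      have : (2 : ℂ) * (Real.pi : ℂ) * Complex.I * ((k : ℕ) : ℂ)
          = ((2 * Real.pi * ((k : ℕ) : ℝ) : ℝ) : ℂ) * Complex.I := by push_cast; ring
      rw [this, norm_mul, Complex.norm_I, mul_one, Complex.norm_real, Real.norm_eq_abs,
        abs_of_nonneg (by positivity)]
    have hkb := key_norm_bound ℓ hℓ1 h A B H hH0 hhb hbase w
    have hκM : ((k : ℕ) : ℝ) ≤ (M : ℝ) := by
      have := k.is_lt
      exact_mod_cast Nat.lt_succ_iff.1 this
    have hκ0 : (0:ℝ) ≤ ((k : ℕ) : ℝ) := Nat.cast_nonneg _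
    have hπ := Real.pi_pos
    -- first factor
    have hfac1 : ‖c‖ * ‖w‖ ^ (2*ℓ - 1) ≤ (2 * Real.pi * α) ^ (2 * ℓ - 1) := by
      rw [hcnorm, hwnorm, ← mul_pow]
      apply pow_le_pow_left₀ (by positivity)
      rw [div_mul_eq_mul_div, div_le_iff₀ hM0]
      nlinarith [mul_le_mul_of_nonneg_left hκM (by positivity : (0:ℝ) ≤ 2*Real.pi*α)]
    -- the exponent quantity
    have hx2 : ‖w‖ * D * H ≤ 2 * Real.pi * τ * D * α := by
      calc ‖w‖ * D * H = 2*Real.pi*((k : ℕ) : ℝ)*D*(τ*(α/M)) := by rw [hwnorm, hH]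
        _ ≤ 2*Real.pi*(M:ℝ)*D*(τ*(α/M)) := by
            have h1 : (0:ℝ) < D := lt_of_lt_of_le one_pos hD1
            have h2 : (0:ℝ) ≤ τ*(α/M) := mul_nonneg (le_of_lt hτ0) hαM0
            gcongr
        _ = 2*Real.pi*τ*D*α := by field_simp
    have hx3 : ‖w‖ * D * H ≤ 2 * Real.pi * τ * D := by
      nlinarith [mul_pos (mul_pos (mul_pos (mul_pos two_pos hπ) hτ0)
        (lt_of_lt_of_le one_pos hD1)) hα0,
        mul_pos (mul_pos (mul_pos two_pos hπ) hτ0) (lt_of_lt_of_le one_pos hD1)]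
    have hx0 : 0 ≤ ‖w‖ * D * H := by
      have h1 : (0:ℝ) ≤ D := le_trans zero_le_one hD1
      positivity
    have hfac2 : 1 + (‖w‖ * D * H) * Real.exp (‖w‖ * D * H)
        ≤ 1 + C * (2 * Real.pi * α) := by
      have h1 : (‖w‖ * D * H) * Real.exp (‖w‖ * D * H)
          ≤ (2 * Real.pi * τ * D * α) * Real.exp (2 * Real.pi * τ * D) :=
        mul_le_mul hx2 (Real.exp_le_exp.2 hx3) (Real.exp_pos _).le
          (mul_nonneg (mul_nonneg (mul_nonneg (by positivity) hτ0.le)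
            (le_trans zero_le_one hD1)) hα0.le)
      have h2 : C * (2 * Real.pi * α) = (2 * Real.pi * τ * D * α) *
          Real.exp (2 * Real.pi * τ * D) := by rw [hC]; ring
      linarith
    calc ‖c‖ * ‖∑ j : Fin ℓ, (A j + w * B j) * Complex.exp (w * (h j : ℂ))‖
        ≤ ‖c‖ * (‖w‖ ^ (2*ℓ - 1) * (1 + (‖w‖ * D * H) * Real.exp (‖w‖ * D * H))) :=
          mul_le_mul_of_nonneg_left hkb (norm_nonneg _)
      _ = (‖c‖ * ‖w‖ ^ (2*ℓ - 1)) * (1 + (‖w‖ * D * H) * Real.exp (‖w‖ * D * H)) := by ring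
      _ ≤ (2 * Real.pi * α) ^ (2 * ℓ - 1) * (1 + C * (2 * Real.pi * α)) := by
          apply mul_le_mul hfac1 hfac2 (by positivity) (by positivity)
  -- conclude via the ℓ² norm
  rw [l2norm]
  set R : ℝ := (2 * Real.pi * α) ^ (2 * ℓ - 1) * (1 + C * (2 * Real.pi * α)) with hR
  have hπ := Real.pi_pos
  have hR0 : 0 ≤ R := by
    rw [hR]
    positivity
  calc Real.sqrt (∑ k, ‖(PhiMat M s ω).mulVec _ k‖ ^ 2)
      ≤ Real.sqrt (∑ _k : Fin (M+1), R ^ 2) := by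
        apply Real.sqrt_le_sqrt
        apply Finset.sum_le_sum
        intro k _
        exact pow_le_pow_left₀ (norm_nonneg _) (key k) 2
    _ = Real.sqrt (((M : ℝ) + 1) * R ^ 2) := by
        rw [Finset.sum_const, Finset.card_univ, Fintype.card_fin, nsmul_eq_mul]
        push_cast
        ring_nf
    _ = Real.sqrt ((M : ℝ) + 1) * R := by
        rw [Real.sqrt_mul (by positivity), Real.sqrt_sq hR0]
    _ = Real.sqrt ((M : ℝ) + 1) * (2 * Real.pi * α) ^ (2 * ℓ - 1) *
          (1 + C * (2 * Real.pi * α)) := by rw [hR]; ring
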